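/- Let q be an odd prime power and let π be a finite-dimensional complex orthogonal representation of SL(2, q). Then χ_π(𝟙) − χ_π(−𝟙) is divisible by 8, where 𝟙 denotes the identity matrix and −𝟙 its negative. -/

import Mathlib

open Matrix

/-- A finite-dimensional complex representation is orthogonal if it carries a nondegenerate
invariant symmetric bilinear form. -/
def FDRep.IsOrthogonal {G : Type} [Group G] (X : FDRep ℂ G) : Prop :=
  ∃ B : X.V →ₗ[ℂ] X.V →ₗ[ℂ] ℂ,
    (∀ v w, B v w = B w v) ∧
    (∀ v, (∀ w, B v w = 0) → v = 0) ∧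
    (∀ (g : G) (v w), B (X.ρ g v) (X.ρ g w) = B v w)

instance : Fact (Even (Fintype.card (Fin 2))) := ⟨by simp⟩

private lemma aux_eq_zero {x : ℂ} (h : x = -x) : x = 0 := by
  have h2 : (2 : ℂ) * x = 0 := by linear_combination h
  exact (mul_eq_zero.mp h2).resolve_left two_ne_zero

/-- A finite-dimensional complex space with a nondegenerate alternating bilinear form has
even dimension. -/
private lemma aux_even_finrank {W : Type*} [AddCommGroup W] [Module ℂ W]
    [FiniteDimensional ℂ W]
    (C : W →ₗ[ℂ] W →ₗ[ℂ] ℂ) (halt : ∀ v w, C v w = -C w v)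
    (hnd : ∀ v, (∀ w, C v w = 0) → v = 0) : Even (Module.finrank ℂ W) := by
  classical
  set b := Module.finBasis ℂ W with hb
  set M := LinearMap.toMatrix₂ b b C with hMdef
  have hndM : M.SeparatingLeft := LinearMap.SeparatingLeft.toMatrix₂ (b₁ := b) (b₂ := b) hnd
  have hdet : M.det ≠ 0 := by
    intro h0
    have h0' : Mᵀ.det = 0 := by rwa [Matrix.det_transpose]
    obtain ⟨v, hv0, hv⟩ := (Matrix.exists_mulVec_eq_zero_iff).mpr h0'
    refine hv0 (hndM v fun w => ?_)
    rw [Subsingleton.elim (Fintype.ofFinite (Fin (Module.finrank ℂ W))) (Fin.fintype _)]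
    rw [Matrix.dotProduct_mulVec, ← Matrix.mulVec_transpose, hv, zero_dotProduct]
  have htr : Mᵀ = -M := by
    ext i j
    rw [Matrix.transpose_apply, Matrix.neg_apply, hMdef, LinearMap.toMatrix₂_apply,
      LinearMap.toMatrix₂_apply]
    exact halt _ _
  have hdd : M.det = (-1 : ℂ) ^ (Module.finrank ℂ W) * M.det := by
    conv_lhs => rw [← Matrix.det_transpose M, htr, Matrix.det_neg, Fintype.card_fin]
  rcases Nat.even_or_odd (Module.finrank ℂ W) with h | h
  · exact h
  · exfalso
    rw [h.neg_one_pow, neg_one_mul] at hdd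
    exact hdet (aux_eq_zero hdd)

/-- For `q` an odd prime power and `π` a finite-dimensional complex orthogonal representation of
`SL(2,q)`, the integer `χ_π(𝟙) − χ_π(−𝟙)` is divisible by `8`. -/
theorem stmt_13 (F : Type) [Field F] [Fintype F] (hq : Odd (Fintype.card F))
    (π : FDRep ℂ (SpecialLinearGroup (Fin 2) F)) (hπ : π.IsOrthogonal) :
    ∃ z : ℤ, π.character 1 - π.character (-1) = 8 * (z : ℂ) := by
  classical
  obtain ⟨B, hsymm, hBnd, hinv⟩ := hπ
  -- find a, b with a² + b² = -1
  obtain ⟨p, hp⟩ := CharP.exists F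
  haveI : Fact p.Prime := ⟨CharP.char_is_prime F p⟩
  haveI : NeZero p := ⟨(CharP.char_is_prime F p).ne_zero⟩
  obtain ⟨a', b', hab'⟩ := CharP.sq_add_sq F p (-1)
  set a : F := (a' : F) with ha
  set b : F := (b' : F) with hbF
  have hab : a ^ 2 + b ^ 2 = -1 := by
    rw [ha, hbF]; rw [hab']; push_cast; ring
  -- the group elements i₀, j₀
  set i₀ : SpecialLinearGroup (Fin 2) F :=
    ⟨!![a, b; b, -a], by rw [Matrix.det_fin_two_of]; linear_combination -hab⟩ with hi₀
  set j₀ : SpecialLinearGroup (Fin 2) F :=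
    ⟨!![0, 1; -1, 0], by rw [Matrix.det_fin_two_of]; ring⟩ with hj₀
  have hii : i₀ * i₀ = -1 := by
    apply Subtype.coe_injective
    show (↑(i₀ * i₀) : Matrix (Fin 2) (Fin 2) F) = ↑(-1 : SpecialLinearGroup (Fin 2) F)
    rw [Matrix.SpecialLinearGroup.coe_mul, Matrix.SpecialLinearGroup.coe_neg, Matrix.SpecialLinearGroup.coe_one,
      hi₀]
    ext i j
    fin_cases i <;> fin_cases j <;>
      simp [Matrix.mul_apply, Fin.sum_univ_two, Matrix.one_apply]
    · linear_combination hab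
    · ring
    · ring
    · linear_combination hab
  have hjj : j₀ * j₀ = -1 := by
    apply Subtype.coe_injective
    show (↑(j₀ * j₀) : Matrix (Fin 2) (Fin 2) F) = ↑(-1 : SpecialLinearGroup (Fin 2) F)
    rw [Matrix.SpecialLinearGroup.coe_mul, Matrix.SpecialLinearGroup.coe_neg, Matrix.SpecialLinearGroup.coe_one,
      hj₀]
    ext i j
    fin_cases i <;> fin_cases j <;>
      simp [Matrix.mul_apply, Fin.sum_univ_two, Matrix.one_apply]
  have hji' : j₀ * i₀ = -(i₀ * j₀) := by
    apply Subtype.coe_injective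
    show (↑(j₀ * i₀) : Matrix (Fin 2) (Fin 2) F) = ↑(-(i₀ * j₀) : SpecialLinearGroup (Fin 2) F)
    rw [Matrix.SpecialLinearGroup.coe_neg, Matrix.SpecialLinearGroup.coe_mul, Matrix.SpecialLinearGroup.coe_mul,
      hi₀, hj₀]
    ext i j
    fin_cases i <;> fin_cases j <;>
      simp [Matrix.mul_apply, Fin.sum_univ_two]
    all_goals ring
  -- endomorphisms
  obtain ⟨E, hEdef⟩ : ∃ E : π.V →ₗ[ℂ] π.V, E = π.ρ (-1) := ⟨_, rfl⟩
  obtain ⟨I, hIdef⟩ : ∃ I : π.V →ₗ[ℂ] π.V, I = π.ρ i₀ := ⟨_, rfl⟩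
  obtain ⟨J, hJdef⟩ : ∃ J : π.V →ₗ[ℂ] π.V, J = π.ρ j₀ := ⟨_, rfl⟩
  obtain ⟨J', hJ'def⟩ : ∃ K : π.V →ₗ[ℂ] π.V, K = π.ρ j₀⁻¹ := ⟨_, rfl⟩
  have hmul : ∀ g h : SpecialLinearGroup (Fin 2) F, π.ρ g * π.ρ h = π.ρ (g * h) :=
    fun g h => (_root_.map_mul π.ρ g h).symm
  have hE2 : E * E = 1 := by
    rw [hEdef, hmul, neg_one_mul, neg_neg, _root_.map_one]
  have hI2 : I * I = E := by rw [hIdef, hEdef, hmul, hii]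
  have hJ2 : J * J = E := by rw [hJdef, hEdef, hmul, hjj]
  have hJJ' : J * J' = 1 := by rw [hJdef, hJ'def, hmul, mul_inv_cancel, _root_.map_one]
  have hJ'J : J' * J = 1 := by rw [hJdef, hJ'def, hmul, inv_mul_cancel, _root_.map_one]
  have hEI : E * I = I * E := by rw [hEdef, hIdef, hmul, hmul, neg_one_mul, mul_neg_one]
  have hEJ : E * J = J * E := by rw [hEdef, hJdef, hmul, hmul, neg_one_mul, mul_neg_one]
  have hJI : J * I = E * (I * J) := by
    rw [hEdef, hIdef, hJdef, hmul, hmul, hmul, hji', neg_one_mul]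
  -- projectors
  obtain ⟨P, hPdef⟩ : ∃ P : π.V →ₗ[ℂ] π.V, P = (2⁻¹ : ℂ) • (1 - E) := ⟨_, rfl⟩
  obtain ⟨A, hAdef⟩ : ∃ A : π.V →ₗ[ℂ] π.V, A = I * P := ⟨_, rfl⟩
  obtain ⟨T, hTdef⟩ : ∃ T : π.V →ₗ[ℂ] π.V, T = (2⁻¹ : ℂ) • (P - Complex.I • A) := ⟨_, rfl⟩
  obtain ⟨T', hT'def⟩ : ∃ S : π.V →ₗ[ℂ] π.V, S = (2⁻¹ : ℂ) • (P + Complex.I • A) := ⟨_, rfl⟩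
  have hEP : E * P = -P := by
    rw [hPdef]
    simp only [mul_smul_comm, mul_sub, mul_one, hE2]
    all_goals module
  have hPP : P * P = P := by
    rw [hPdef]
    simp only [smul_mul_assoc, mul_smul_comm, sub_mul, mul_sub, one_mul, mul_one, hE2]
    all_goals module
  have hPI : P * I = I * P := by
    rw [hPdef]
    simp only [smul_mul_assoc, mul_smul_comm, sub_mul, mul_sub, one_mul, mul_one, hEI]
    all_goals module
  have hPJ : P * J = J * P := by
    rw [hPdef]
    simp only [smul_mul_assoc, mul_smul_comm, sub_mul, mul_sub, one_mul, mul_one, hEJ]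
    all_goals module
  have hPA : P * A = A := by rw [hAdef, ← mul_assoc, hPI, mul_assoc, hPP]
  have hAP : A * P = A := by rw [hAdef, mul_assoc, hPP]
  have hEA : E * A = -A := by rw [hAdef, ← mul_assoc, hEI, mul_assoc, hEP, mul_neg]
  have hIA : I * A = -P := by rw [hAdef, ← mul_assoc, hI2, hEP]
  have hAA : A * A = -P := by
    calc A * A = I * (P * A) := by rw [hAdef, mul_assoc]
      _ = I * A := by rw [hPA]
      _ = -P := hIA
  have hTT : T * T = T := by
    rw [hTdef]
    simp only [smul_mul_assoc, mul_smul_comm, sub_mul, mul_sub, smul_sub, smul_smul,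
      hPP, hPA, hAP, hAA, Complex.I_mul_I]
    match_scalars <;> (ring_nf; try simp [Complex.I_sq]; try ring_nf; try norm_num)
  have hET : E * T = -T := by
    rw [hTdef]
    simp only [mul_smul_comm, mul_sub, hEP, hEA]
    all_goals module
  have hIT : I * T = Complex.I • T := by
    rw [hTdef]
    simp only [mul_smul_comm, mul_sub, ← hAdef, hIA, smul_sub, smul_smul, Complex.I_mul_I]
    match_scalars <;> (ring_nf; try simp [Complex.I_sq]; try ring_nf; try norm_num)
  have hJA : J * A = -(A * J) := by
    have h1 : J * A = (E * A) * J := by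
      calc J * A = (J * I) * P := by rw [hAdef, ← mul_assoc]
        _ = (E * (I * J)) * P := by rw [hJI]
        _ = ((E * I) * J) * P := by rw [← mul_assoc]
        _ = (E * I) * (J * P) := by rw [mul_assoc]
        _ = (E * I) * (P * J) := by rw [← hPJ]
        _ = ((E * I) * P) * J := by rw [← mul_assoc]
        _ = (E * (I * P)) * J := by rw [mul_assoc E I P]
        _ = (E * A) * J := by rw [← hAdef]
    rw [h1, hEA, neg_mul]
  have hJT : J * T = T' * J := by
    rw [hTdef, hT'def]
    simp only [smul_mul_assoc, mul_smul_comm, mul_sub, sub_mul, add_mul, smul_add, smul_sub,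
      hJA, hPJ]
    all_goals module
  have hTT' : T + T' = P := by
    rw [hTdef, hT'def]; module
  have hJTJ' : (J * T) * J' = T' := by rw [hJT, mul_assoc, hJJ', mul_one]
  -- the subspace W
  set W := LinearMap.range T with hWdef
  have hproj : LinearMap.IsProj W T := by
    refine ⟨fun x => LinearMap.mem_range_self T x, ?_⟩
    rintro x ⟨y, rfl⟩
    show T (T y) = T y
    rw [← Module.End.mul_apply, hTT]
  have htraceT : LinearMap.trace ℂ π.V T = (Module.finrank ℂ W : ℂ) := hproj.trace
  have htraceT' : LinearMap.trace ℂ π.V T' = LinearMap.trace ℂ π.V T := by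
    rw [← hJTJ', LinearMap.trace_mul_comm, ← mul_assoc, hJ'J, one_mul]
  -- character computation
  have h1E : (1 : π.V →ₗ[ℂ] π.V) - E = (2 : ℂ) • P := by
    rw [hPdef, smul_smul]
    norm_num
  have hchar : π.character 1 - π.character (-1) =
      (4 : ℂ) * (Module.finrank ℂ W : ℂ) := by
    calc π.character 1 - π.character (-1)
        = LinearMap.trace ℂ π.V (π.ρ 1) - LinearMap.trace ℂ π.V (π.ρ (-1)) := rfl
      _ = LinearMap.trace ℂ π.V (1 - E) := by rw [_root_.map_one, ← hEdef, _root_.map_sub]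
      _ = (2 : ℂ) * LinearMap.trace ℂ π.V P := by rw [h1E, _root_.map_smul, smul_eq_mul]
      _ = (2 : ℂ) * (LinearMap.trace ℂ π.V T + LinearMap.trace ℂ π.V T') := by
          rw [← _root_.map_add, hTT']
      _ = (4 : ℂ) * (Module.finrank ℂ W : ℂ) := by rw [htraceT', htraceT]; ring
  -- eigen-properties of elements of W
  have hEv : ∀ v : W, E (v : π.V) = -(v : π.V) := by
    rintro ⟨v, x, rfl⟩
    show E (T x) = -(T x)
    rw [← Module.End.mul_apply, hET, LinearMap.neg_apply]
  have hIv : ∀ v : W, I (v : π.V) = Complex.I • (v : π.V) := by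
    rintro ⟨v, x, rfl⟩
    show I (T x) = Complex.I • (T x)
    rw [← Module.End.mul_apply, hIT, LinearMap.smul_apply]
  have hinvJ : ∀ x y : π.V, B (J x) (J y) = B x y := by
    rw [hJdef]; exact fun x y => hinv j₀ x y
  have hinvI : ∀ x y : π.V, B (I x) (I y) = B x y := by
    rw [hIdef]; exact fun x y => hinv i₀ x y
  have hinvE : ∀ x y : π.V, B (E x) (E y) = B x y := by
    rw [hEdef]; exact fun x y => hinv (-1) x y
  -- the alternating form on W
  set C : W →ₗ[ℂ] W →ₗ[ℂ] ℂ := B.compl₁₂ W.subtype (J ∘ₗ W.subtype) with hCdef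
  have hCapp : ∀ v w : W, C v w = B (v : π.V) (J (w : π.V)) := fun v w => rfl
  have halt : ∀ v w : W, C v w = -C w v := by
    intro v w
    rw [hCapp, hCapp]
    have h1 : B (J (w : π.V)) (J (J (v : π.V))) = B (w : π.V) (J (v : π.V)) := hinvJ _ _
    have h2 : J (J (v : π.V)) = -(v : π.V) := by
      rw [← Module.End.mul_apply, hJ2]; exact hEv v
    rw [h2, _root_.map_neg] at h1
    rw [← h1, neg_neg, hsymm]
  have hCnd : ∀ v : W, (∀ w : W, C v w = 0) → v = 0 := by
    intro v hv
    refine Subtype.ext (hBnd _ fun u => ?_)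
    have hBvT : B (v : π.V) (T u) = 0 := by
      have h1 : B (I (v : π.V)) (I (T u)) = B (v : π.V) (T u) := hinvI _ _
      have h2 : I (T u) = Complex.I • T u := by
        rw [← Module.End.mul_apply, hIT, LinearMap.smul_apply]
      rw [h2, hIv v] at h1
      simp only [_root_.map_smul, LinearMap.smul_apply, smul_eq_mul] at h1
      exact aux_eq_zero (by linear_combination (B (v : π.V) (T u)) * Complex.I_mul_I - h1)
    have hBvT' : B (v : π.V) (T' u) = 0 := by
      have h3 : T' u = J (T (J' u)) := by
        rw [← hJTJ', Module.End.mul_apply, Module.End.mul_apply]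
      rw [h3]
      exact hv ⟨T (J' u), LinearMap.mem_range_self T (J' u)⟩
    have hBv3 : B (v : π.V) (u - P u) = 0 := by
      have h4 : u - P u = (2⁻¹ : ℂ) • (u + E u) := by
        have h5 : P u = (2⁻¹ : ℂ) • (u - E u) := by
          rw [hPdef, LinearMap.smul_apply, LinearMap.sub_apply, Module.End.one_apply]
        rw [h5]; module
      have h6 : B (v : π.V) (E u) = -B (v : π.V) u := by
        have h7 : B (E (v : π.V)) (E (E u)) = B (v : π.V) (E u) := hinvE _ _
        have h8 : E (E u) = u := by rw [← Module.End.mul_apply, hE2, Module.End.one_apply]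
        rw [h8, hEv v, _root_.map_neg, LinearMap.neg_apply] at h7
        rw [← h7]
      rw [h4, _root_.map_smul, _root_.map_add, h6, smul_eq_mul]
      ring
    have hdec : u = T u + T' u + (u - P u) := by
      have h3 : T u + T' u = P u := by rw [← LinearMap.add_apply, hTT']
      rw [h3]; abel
    calc B (v : π.V) u = B (v : π.V) (T u + T' u + (u - P u)) := by rw [← hdec]
      _ = B (v : π.V) (T u) + B (v : π.V) (T' u) + B (v : π.V) (u - P u) := by
          rw [_root_.map_add, _root_.map_add]
      _ = 0 := by rw [hBvT, hBvT', hBv3]; ring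
  have heven : Even (Module.finrank ℂ W) := aux_even_finrank C halt hCnd
  obtain ⟨m, hm⟩ := heven
  refine ⟨m, ?_⟩
  rw [hchar, hm]
  push_cast
  ring
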